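/- Let (X,ℬ,μ) and (Y,𝒞,ν) be non-atomic Lebesgue probability spaces, and let {α_i}_{i=1}^n and {β_i}_{i=1}^n be finite sequences of ordered measurable partitions of X and Y respectively, each partition having N elements. If θ:(X,ℬ,μ)→(Y,𝒞,ν) is an ε-measure-preserving invertible measurable map such that (1/n)·Σ_{i=1}^n 1[α_i(x) ≠ β_i(θ(x))] ≤ ε holds on a set of μ-measure at least 1−ε, then the d-bar distance satisfies d̄({α_i}_{i=1}^n, {β_i}_{i=1}^n) ≤ 16ε. -/

import Mathlib

open MeasureTheory Filter Set
open scoped Classical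

/-- An ordered measurable partition with `N` elements. -/
def IsOrdPartition {X : Type*} [MeasurableSpace X] {N : ℕ} (p : Fin N → Set X) : Prop :=
  (∀ j, MeasurableSet (p j)) ∧ (∀ j j', j ≠ j' → Disjoint (p j) (p j')) ∧
    (⋃ j, p j) = Set.univ

/-- The partition distance `d(α,β) = Σ_j μ(A_j Δ B_j)`. -/
noncomputable def partDist {X : Type*} [MeasurableSpace X] (μ : Measure X) {N : ℕ}
    (p q : Fin N → Set X) : ℝ :=
  ∑ j : Fin N, (μ (symmDiff (p j) (q j))).toReal

/-- Two sequences of ordered partitions have the same distribution. -/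
def SameDist {X Y : Type*} [MeasurableSpace X] [MeasurableSpace Y]
    (μ : Measure X) (ν : Measure Y) {n N : ℕ}
    (α : Fin n → Fin N → Set X) (β : Fin n → Fin N → Set Y) : Prop :=
  ∀ idx : Fin n → Fin N, μ (⋂ i, α i (idx i)) = ν (⋂ i, β i (idx i))

/-- The d-bar distance between two sequences of ordered partitions. -/
noncomputable def dbar {X Y : Type*} [MeasurableSpace X] [MeasurableSpace Y]
    (μ : Measure X) (ν : Measure Y) {n N : ℕ}
    (α : Fin n → Fin N → Set X) (β : Fin n → Fin N → Set Y) : ℝ :=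
  sInf {d : ℝ | ∃ α' : Fin n → Fin N → Set Y, (∀ i, IsOrdPartition (α' i)) ∧
    SameDist μ ν α α' ∧ d = (1 / (n : ℝ)) * ∑ i : Fin n, partDist ν (α' i) (β i)}

/-- `θ` is ε-measure-preserving: off a set of measure `< ε`, it distorts measures by a
factor `1 ± ε`. -/
def EpsMeasurePreserving {X Y : Type*} [MeasurableSpace X] [MeasurableSpace Y]
    (μ : Measure X) (ν : Measure Y) (θ : X ≃ᵐ Y) (ε : ℝ) : Prop :=
  ∃ E : Set X, MeasurableSet E ∧ μ E < ENNReal.ofReal ε ∧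
    ∀ A : Set X, MeasurableSet A → A ⊆ Eᶜ →
      ENNReal.ofReal (1 - ε) * μ A ≤ ν (⇑θ '' A) ∧
        ν (⇑θ '' A) ≤ ENNReal.ofReal (1 + ε) * μ A


open scoped ENNReal Topology
open scoped Function

lemma aux_exists_subset_measure_eq {Y : Type*} [MeasurableSpace Y] [StandardBorelSpace Y]
    (ν : Measure Y) [IsFiniteMeasure ν] [NullSingletonClass ν] {A : Set Y} (hA : MeasurableSet A)
    {c : ℝ≥0∞} (hc : c ≤ ν A) : ∃ B, B ⊆ A ∧ MeasurableSet B ∧ ν B = c := by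
  rcases hc.eq_or_lt with rfl | hlt
  · exact ⟨A, Subset.rfl, hA, rfl⟩
  rcases eq_or_ne c 0 with rfl | hc0
  · exact ⟨∅, empty_subset A, MeasurableSet.empty, measure_empty⟩
  obtain ⟨φ, hφ⟩ := exists_measurableEmbedding_real Y
  set m : Measure ℝ := Measure.map φ (ν.restrict A) with hmdef
  have hmap : ∀ {s : Set ℝ}, MeasurableSet s → m s = ν (A ∩ φ ⁻¹' s) := by
    intro s hs
    rw [hmdef, Measure.map_apply hφ.measurable hs,
      Measure.restrict_apply (hφ.measurable hs), Set.inter_comm]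
  have hmuniv : m univ = ν A := by rw [hmap MeasurableSet.univ]; simp
  have hfinm : IsFiniteMeasure m := ⟨by rw [hmuniv]; exact measure_lt_top ν A⟩
  have hatom : ∀ r : ℝ, m {r} = 0 := by
    intro r
    rw [hmap (measurableSet_singleton r)]
    refine measure_mono_null inter_subset_right ?_
    refine Set.Subsingleton.measure_zero (fun a ha b hb => hφ.injective ?_) ν
    simp only [mem_preimage, mem_singleton_iff] at ha hb
    rw [ha, hb]
  set h : ℝ → ℝ := fun t => (m (Iic t)).toReal with hhdef
  have hmono : Monotone h := fun a b hab =>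
    ENNReal.toReal_mono (measure_ne_top m _) (measure_mono (Iic_subset_Iic.2 hab))
  -- right limits
  have keyR : ∀ t : ℝ, Tendsto (fun k : ℕ => h (t + 1 / (k + 1))) atTop (𝓝 (h t)) := by
    intro t
    have hiInter : (⋂ k : ℕ, Iic (t + 1 / (k + 1))) = Iic t := by
      ext x
      simp only [mem_iInter, mem_Iic]
      constructor
      · intro hx
        by_contra hlt'
        push_neg at hlt'
        obtain ⟨k, hk⟩ := exists_nat_one_div_lt (sub_pos.2 hlt')
        have := hx k
        push_cast at hk this
        linarith
      · intro hx k
        have : (0:ℝ) < 1 / (k + 1) := by positivity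
        linarith
    have hanti : Antitone fun k : ℕ => Iic (t + 1 / (k + 1 : ℝ)) := by
      intro a b hab
      apply Iic_subset_Iic.2
      have ha' : (0:ℝ) < a + 1 := by positivity
      have : (1:ℝ) / (b+1) ≤ 1 / (a+1) := by
        apply one_div_le_one_div_of_le ha'
        exact_mod_cast add_le_add_left (Nat.cast_le.2 hab) 1
      linarith
    have := tendsto_measure_iInter_atTop (μ := m)
      (fun k => (measurableSet_Iic).nullMeasurableSet) hanti ⟨0, measure_ne_top m _⟩
    rw [hiInter] at this
    exact (ENNReal.tendsto_toReal (measure_ne_top m _)).comp this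
  -- left limits
  have keyL : ∀ t : ℝ, Tendsto (fun k : ℕ => h (t - 1 / (k + 1))) atTop (𝓝 (h t)) := by
    intro t
    have hiUnion : (⋃ k : ℕ, Iic (t - 1 / (k + 1))) = Iio t := by
      ext x
      simp only [mem_iUnion, mem_Iic, mem_Iio]
      constructor
      · rintro ⟨k, hk⟩
        have : (0:ℝ) < 1 / (k + 1) := by positivity
        linarith
      · intro hx
        obtain ⟨k, hk⟩ := exists_nat_one_div_lt (sub_pos.2 hx)
        refine ⟨k, ?_⟩
        push_cast at hk ⊢
        linarith
    have hmono' : Monotone fun k : ℕ => Iic (t - 1 / (k + 1 : ℝ)) := by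
      intro a b hab
      apply Iic_subset_Iic.2
      have ha' : (0:ℝ) < a + 1 := by positivity
      have : (1:ℝ) / (b+1) ≤ 1 / (a+1) := by
        apply one_div_le_one_div_of_le ha'
        exact_mod_cast add_le_add_left (Nat.cast_le.2 hab) 1
      linarith
    have hIio : m (Iio t) = m (Iic t) :=
      measure_congr (Iio_ae_eq_Iic' (hatom t))
    have := tendsto_measure_iUnion_atTop (μ := m) hmono'
    rw [hiUnion, hIio] at this
    exact (ENNReal.tendsto_toReal (measure_ne_top m _)).comp this
  set c' := c.toReal with hc'def
  have hctop : c ≠ ⊤ := (hlt.trans (measure_lt_top ν A)).ne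
  have hc'pos : 0 < c' := ENNReal.toReal_pos hc0 hctop
  have hc'lt : c' < (ν A).toReal := ENNReal.toReal_strict_mono (measure_ne_top ν A) hlt
  have htop : Tendsto h atTop (𝓝 (ν A).toReal) := by
    have h1 := tendsto_measure_Iic_atTop m
    rw [hmuniv] at h1
    exact (ENNReal.tendsto_toReal (measure_ne_top ν A)).comp h1
  have hbot : Tendsto h atBot (𝓝 (0 : ℝ)) := by
    have h0 : (⋂ t : ℝ, Iic t) = ∅ := by
      ext x
      simp only [mem_iInter, mem_Iic, mem_empty_iff_false, iff_false, not_forall, not_le]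
      exact ⟨x - 1, by linarith⟩
    have h1 := tendsto_measure_iInter_atBot (μ := m)
      (fun t => measurableSet_Iic.nullMeasurableSet) monotone_Iic ⟨0, measure_ne_top m _⟩
    rw [h0, measure_empty] at h1
    have h2 := (ENNReal.tendsto_toReal ENNReal.zero_ne_top).comp h1
    rw [ENNReal.toReal_zero] at h2
    exact h2
  obtain ⟨b, hb⟩ := (htop.eventually_const_lt hc'lt).exists
  obtain ⟨a, ha⟩ := (hbot.eventually_lt_const hc'pos).exists
  set s : Set ℝ := {t | c' ≤ h t} with hsdef
  have hsne : s.Nonempty := ⟨b, hb.le⟩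
  have hsbdd : BddBelow s := by
    refine ⟨a, fun t ht => le_of_not_gt fun hta => ?_⟩
    exact absurd (ht.trans (hmono hta.le)) (not_le.2 ha)
  set t₀ := sInf s with ht₀def
  have hge : c' ≤ h t₀ := by
    refine ge_of_tendsto (keyR t₀) (Eventually.of_forall fun k => ?_)
    have hpos : (0:ℝ) < 1 / (k + 1) := by positivity
    obtain ⟨u, hu, hu2⟩ := exists_lt_of_csInf_lt hsne (show t₀ < t₀ + 1 / (k+1) by linarith)
    exact le_trans hu (hmono hu2.le)
  have hle : h t₀ ≤ c' := by
    refine le_of_tendsto (keyL t₀) (Eventually.of_forall fun k => ?_)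
    by_contra hcon
    push_neg at hcon
    have hmem : t₀ - 1 / (k+1) ∈ s := hcon.le
    have := csInf_le hsbdd hmem
    have hpos : (0:ℝ) < 1 / (k + 1) := by positivity
    rw [← ht₀def] at this
    linarith
  have hfinal : m (Iic t₀) = c :=
    (ENNReal.toReal_eq_toReal_iff' (measure_ne_top m _) hctop).1 (le_antisymm hle hge)
  exact ⟨A ∩ φ ⁻¹' Iic t₀, inter_subset_left,
    hA.inter (hφ.measurable measurableSet_Iic), by rw [← hmap measurableSet_Iic]; exact hfinal⟩

lemma aux_subdivide {Y : Type*} [MeasurableSpace Y] [StandardBorelSpace Y]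
    (ν : Measure Y) [IsFiniteMeasure ν] [NullSingletonClass ν] {T : Type*} [DecidableEq T] (w : T → ℝ≥0∞)
    (s : Finset T) : ∀ (A : Set Y), MeasurableSet A → (∑ t ∈ s, w t) = ν A →
    ∃ C : T → Set Y, (∀ t, MeasurableSet (C t)) ∧ (∀ t, C t ⊆ A) ∧
      (∀ t ∉ s, C t = ∅) ∧ Pairwise (Disjoint on C) ∧ (∀ t ∈ s, ν (C t) = w t) := by
  induction s using Finset.induction_on with
  | empty =>
    intro A hA hsum
    exact ⟨fun _ => ∅, fun _ => MeasurableSet.empty, fun _ => empty_subset A,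
      fun _ _ => rfl, fun _ _ _ => disjoint_bot_left, fun t ht => absurd ht (Finset.notMem_empty t)⟩
  | @insert a s' ha IH =>
    intro A hA hsum
    rw [Finset.sum_insert ha] at hsum
    have hwa : w a ≤ ν A := by rw [← hsum]; exact le_self_add
    obtain ⟨B, hBA, hBm, hBν⟩ := aux_exists_subset_measure_eq ν hA hwa
    have hwa_top : w a ≠ ⊤ := (hwa.trans_lt (measure_lt_top ν A)).ne
    have hsum' : ∑ t ∈ s', w t = ν (A \ B) := by
      rw [measure_diff hBA hBm.nullMeasurableSet (hBν ▸ hwa_top), hBν, ← hsum,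
        ENNReal.add_sub_cancel_left hwa_top]
    obtain ⟨C, hCm, hCA, hCnot, hCdisj, hCν⟩ := IH (A \ B) (hA.diff hBm) hsum'
    refine ⟨fun t => if t = a then B else C t, fun t => ?_, fun t => ?_, fun t ht => ?_,
      fun t t' htt' => ?_, fun t ht => ?_⟩
    · by_cases h : t = a <;> simp [h, hBm, hCm t]
    · by_cases h : t = a
      · simp only [h, if_true]; exact hBA
      · simp only [if_neg h]; exact (hCA t).trans diff_subset
    · have h1 : t ≠ a := fun h => ht (h ▸ Finset.mem_insert_self a s')
      have h2 : t ∉ s' := fun h => ht (Finset.mem_insert_of_mem h)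
      simp [h1, hCnot t h2]
    · simp only [Function.onFun]
      by_cases h : t = a
      · subst h
        have h' : ¬ t' = t := fun hh => htt' hh.symm
        simp only [if_pos rfl, if_neg h']
        exact Disjoint.mono_right (hCA t') disjoint_sdiff_right
      · by_cases h' : t' = a
        · subst h'
          simp only [if_neg h, if_pos rfl]
          exact Disjoint.mono_left (hCA t) disjoint_sdiff_left
        · simp only [if_neg h, if_neg h']
          exact hCdisj htt'
    · rcases Finset.mem_insert.1 ht with rfl | hts'
      · simp [hBν]
      · have h1 : t ≠ a := fun h => ha (h ▸ hts')
        simp [h1, hCν t hts']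

lemma aux_exists_partition {Y : Type*} [MeasurableSpace Y] [StandardBorelSpace Y]
    (ν : Measure Y) [IsProbabilityMeasure ν] [NullSingletonClass ν] {T : Type*} [Fintype T] [Nonempty T]
    (Q : T → Set Y) (hQm : ∀ t, MeasurableSet (Q t)) (hQd : Pairwise (Disjoint on Q))
    (p : T → ℝ≥0∞) (hp : ∑ t, p t = 1) :
    ∃ C : T → Set Y, (∀ t, MeasurableSet (C t)) ∧ Pairwise (Disjoint on C) ∧
      (⋃ t, C t) = univ ∧ (∀ t, ν (C t) = p t) ∧
      ν (⋃ t, C t \ Q t) ≤ ∑ t, (p t - ν (Q t)) := by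
  classical
  have hSex : ∀ t, ∃ B, B ⊆ Q t ∧ MeasurableSet B ∧ ν B = min (p t) (ν (Q t)) :=
    fun t => aux_exists_subset_measure_eq ν (hQm t) (min_le_right _ _)
  choose S hSQ hSm hSν using hSex
  have hSd : Pairwise (Disjoint on S) := fun t t' h => (hQd h).mono (hSQ t) (hSQ t')
  have hU0m : MeasurableSet (⋃ t, S t) := MeasurableSet.iUnion hSm
  have hU0 : ν (⋃ t, S t) = ∑ t, min (p t) (ν (Q t)) := by
    rw [measure_iUnion hSd hSm, tsum_fintype]
    exact Finset.sum_congr rfl fun t _ => hSν t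
  set w : T → ℝ≥0∞ := fun t => p t - min (p t) (ν (Q t)) with hwdef
  have hw_eq : ∀ t, w t = p t - ν (Q t) := by
    intro t
    rcases le_total (ν (Q t)) (p t) with h | h
    · simp [hwdef, min_eq_right h]
    · simp [hwdef, min_eq_left h, tsub_eq_zero_of_le h]
  have hmin_le : ∀ t, min (p t) (ν (Q t)) ≤ p t := fun t => min_le_left _ _
  have hminfin : ∑ t, min (p t) (ν (Q t)) ≠ ⊤ := by
    refine ne_top_of_le_ne_top (hp ▸ ENNReal.one_ne_top) (Finset.sum_le_sum fun t _ => hmin_le t)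
  have hsum_w : ∑ t, w t = ν ((⋃ t, S t)ᶜ) := by
    have h1 : ∑ t, w t + ∑ t, min (p t) (ν (Q t)) = 1 := by
      rw [← Finset.sum_add_distrib, ← hp]
      exact Finset.sum_congr rfl fun t _ => tsub_add_cancel_of_le (hmin_le t)
    have h2 : ν ((⋃ t, S t)ᶜ) + ∑ t, min (p t) (ν (Q t)) = 1 := by
      rw [← hU0, add_comm, measure_add_measure_compl hU0m, measure_univ]
    exact WithTop.add_right_cancel hminfin (h1.trans h2.symm)
  obtain ⟨R, hRm, hRsub, -, hRd, hRν⟩ :=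
    aux_subdivide ν w Finset.univ ((⋃ t, S t)ᶜ) hU0m.compl hsum_w
  have hRν' : ∀ t, ν (R t) = w t := fun t => hRν t (Finset.mem_univ t)
  have hSR : ∀ t t', Disjoint (S t) (R t') := by
    intro t t'
    refine Disjoint.mono_right (hRsub t') ?_
    exact disjoint_compl_right.mono_left (subset_iUnion S t)
  set D : T → Set Y := fun t => S t ∪ R t with hDdef
  have hDm : ∀ t, MeasurableSet (D t) := fun t => (hSm t).union (hRm t)
  have hDν : ∀ t, ν (D t) = p t := by
    intro t
    rw [hDdef]
    simp only
    rw [measure_union (hSR t t) (hRm t), hSν, hRν', add_comm]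
    exact tsub_add_cancel_of_le (hmin_le t)
  have hDd : Pairwise (Disjoint on D) := by
    intro t t' h
    simp only [Function.onFun, hDdef]
    rw [Set.disjoint_union_left]
    constructor <;> rw [Set.disjoint_union_right]
    · exact ⟨hSd h, hSR t t'⟩
    · exact ⟨(hSR t' t).symm, hRd h⟩
  have hDuniv : ν (⋃ t, D t) = 1 := by
    rw [measure_iUnion hDd hDm, tsum_fintype, ← hp]
    exact Finset.sum_congr rfl fun t _ => hDν t
  set L : Set Y := (⋃ t, D t)ᶜ with hLdef
  have hLm : MeasurableSet L := (MeasurableSet.iUnion hDm).compl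
  have hLν : ν L = 0 := by
    rw [hLdef, measure_compl (MeasurableSet.iUnion hDm) (measure_ne_top ν _), hDuniv,
      measure_univ, tsub_self]
  set t₀ : T := Classical.arbitrary T with ht₀def
  set C : T → Set Y := fun t => if t = t₀ then D t ∪ L else D t with hCdef
  have hDC : ∀ t, D t ⊆ C t := by
    intro t
    by_cases h : t = t₀ <;> simp [hCdef, h]
  have hCm : ∀ t, MeasurableSet (C t) := by
    intro t
    by_cases h : t = t₀
    · simp only [hCdef, if_pos h]; exact (hDm t).union hLm
    · simp only [hCdef, if_neg h]; exact hDm t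
  have hLD : ∀ t, Disjoint L (D t) := fun t =>
    disjoint_compl_left.mono_right (subset_iUnion D t)
  have hCd : Pairwise (Disjoint on C) := by
    intro t t' h
    simp only [Function.onFun, hCdef]
    by_cases h1 : t = t₀
    · have h2 : ¬ t' = t₀ := fun hh => h (h1.trans hh.symm)
      rw [if_pos h1, if_neg h2, Set.disjoint_union_left]
      exact ⟨hDd h, (hLD t').symm.symm⟩
    · by_cases h2 : t' = t₀
      · rw [if_neg h1, if_pos h2, Set.disjoint_union_right]
        exact ⟨hDd h, (hLD t).symm⟩
      · rw [if_neg h1, if_neg h2]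
        exact hDd h
  have hCuniv : (⋃ t, C t) = univ := by
    apply eq_univ_of_forall
    intro x
    by_cases hx : x ∈ ⋃ t, D t
    · obtain ⟨t, ht⟩ := mem_iUnion.1 hx
      exact mem_iUnion.2 ⟨t, hDC t ht⟩
    · refine mem_iUnion.2 ⟨t₀, ?_⟩
      simp only [hCdef, if_pos rfl]
      exact Or.inr hx
  have hCν : ∀ t, ν (C t) = p t := by
    intro t
    by_cases h : t = t₀
    · simp only [hCdef, if_pos h]
      have h1 : ν (D t ∪ L) = ν (D t) := by
        refine le_antisymm ?_ (measure_mono subset_union_left)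
        calc ν (D t ∪ L) ≤ ν (D t) + ν L := measure_union_le _ _
          _ = ν (D t) := by rw [hLν, add_zero]
      exact h1.trans (hDν t)
    · simp only [hCdef, if_neg h]
      exact hDν t
  refine ⟨C, hCm, hCd, hCuniv, hCν, ?_⟩
  have hsub : (⋃ t, C t \ Q t) ⊆ (⋃ t, R t) ∪ L := by
    intro x hx
    obtain ⟨t, hxt⟩ := mem_iUnion.1 hx
    have hxC := hxt.1
    have hxQ := hxt.2
    have hxD : x ∈ D t ∨ x ∈ L := by
      by_cases h : t = t₀
      · simp only [hCdef, if_pos h] at hxC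
        rcases hxC with h' | h'
        · exact Or.inl (h ▸ h')
        · exact Or.inr h'
      · simp only [hCdef, if_neg h] at hxC
        exact Or.inl hxC
    rcases hxD with h' | h'
    · rcases h' with h'' | h''
      · exact absurd (hSQ t h'') hxQ
      · exact Or.inl (mem_iUnion.2 ⟨t, h''⟩)
    · exact Or.inr h'
  calc ν (⋃ t, C t \ Q t) ≤ ν ((⋃ t, R t) ∪ L) := measure_mono hsub
    _ ≤ ν (⋃ t, R t) + ν L := measure_union_le _ _
    _ = ∑ t, w t := by
        rw [hLν, add_zero, measure_iUnion hRd hRm, tsum_fintype]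
        exact Finset.sum_congr rfl fun t _ => hRν' t
    _ = ∑ t, (p t - ν (Q t)) := Finset.sum_congr rfl fun t _ => hw_eq t

lemma aux_sum_meas {Y : Type*} [MeasurableSpace Y] (ν : Measure Y) {N : ℕ}
    {P : Fin N → Set Y} (hP : IsOrdPartition P) : ∑ j, ν (P j) = ν univ := by
  rw [← hP.2.2, measure_iUnion (fun j j' h => hP.2.1 j j' h) hP.1, tsum_fintype]

/-- Ornstein–Weiss. If an ε-measure-preserving invertible map θ
matches the partition indices except on an ε-fraction of indices, on a set of measure at
least 1-ε, then the d-bar distance of the two sequences of partitions is at most 16ε. -/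
theorem statement14 {X Y : Type*} [MeasurableSpace X] [MeasurableSpace Y]
    [StandardBorelSpace X] [StandardBorelSpace Y]
    (μ : Measure X) (ν : Measure Y) [IsProbabilityMeasure μ] [IsProbabilityMeasure ν]
    [NullSingletonClass μ] [NullSingletonClass ν] {n N : ℕ}
    (α : Fin n → Fin N → Set X) (β : Fin n → Fin N → Set Y)
    (hα : ∀ i, IsOrdPartition (α i)) (hβ : ∀ i, IsOrdPartition (β i))
    (θ : X ≃ᵐ Y) (ε : ℝ) (hθ : EpsMeasurePreserving μ ν θ ε)
    (hmatch : ENNReal.ofReal (1 - ε) ≤ μ {x : X |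
      ((Finset.univ.filter fun i : Fin n =>
          ∀ j : Fin N, x ∈ α i j → θ x ∉ β i j).card : ℝ) ≤ ε * n}) :
    dbar μ ν α β ≤ 16 * ε := by
  classical
  obtain ⟨E, hEm, hElt, hEdist⟩ := hθ
  have hε : 0 < ε := by
    by_contra h
    push_neg at h
    rw [ENNReal.ofReal_eq_zero.2 h] at hElt
    exact absurd hElt (by simp)
  rw [dbar]
  have hbdd : BddBelow {d : ℝ | ∃ α' : Fin n → Fin N → Set Y, (∀ i, IsOrdPartition (α' i)) ∧
      SameDist μ ν α α' ∧ d = (1 / (n : ℝ)) * ∑ i : Fin n, partDist ν (α' i) (β i)} := by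
    refine ⟨0, fun d hd => ?_⟩
    obtain ⟨α', -, -, rfl⟩ := hd
    refine mul_nonneg (by positivity) (Finset.sum_nonneg fun i _ => ?_)
    exact Finset.sum_nonneg fun j _ => ENNReal.toReal_nonneg
  -- case n = 0
  rcases Nat.eq_zero_or_pos n with hn0 | hn
  · subst hn0
    have hmem : (0:ℝ) ∈ {d : ℝ | ∃ α' : Fin 0 → Fin N → Set Y, (∀ i, IsOrdPartition (α' i)) ∧
        SameDist μ ν α α' ∧ d = (1 / ((0:ℕ) : ℝ)) * ∑ i : Fin 0, partDist ν (α' i) (β i)} := by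
      refine ⟨fun i => i.elim0, fun i => i.elim0, fun idx => ?_, by simp⟩
      rw [iInter_of_empty, iInter_of_empty, measure_univ, measure_univ]
    exact le_trans (csInf_le hbdd hmem) (by linarith)
  -- case N = 0
  rcases Nat.eq_zero_or_pos N with hN0 | hN
  · exfalso
    subst hN0
    have h1 : (univ : Set X) = ∅ := by
      rw [← (hα ⟨0, hn⟩).2.2]
      exact iUnion_of_empty _
    have h2 := measure_univ (μ := μ)
    rw [h1, measure_empty] at h2
    exact one_ne_zero h2.symm
  have hNe : Nonempty (Fin N) := ⟨⟨0, hN⟩⟩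
  -- the partition of X into cells indexed by names
  set A : (Fin n → Fin N) → Set X := fun t => ⋂ i, α i (t i) with hAdef
  have hAm : ∀ t, MeasurableSet (A t) := fun t => MeasurableSet.iInter fun i => (hα i).1 _
  have hAd : Pairwise (Disjoint on A) := by
    intro t t' h
    obtain ⟨i, hi⟩ := Function.ne_iff.1 h
    exact ((hα i).2.1 _ _ hi).mono (iInter_subset _ i) (iInter_subset _ i)
  have hAu : (⋃ t, A t) = univ := by
    apply eq_univ_of_forall
    intro x
    have hex : ∀ i, ∃ j, x ∈ α i j := by
      intro i
      have hx : x ∈ ⋃ j, α i j := (hα i).2.2 ▸ mem_univ x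
      exact mem_iUnion.1 hx
    choose tf htf using hex
    exact mem_iUnion.2 ⟨tf, mem_iInter.2 htf⟩
  set p : (Fin n → Fin N) → ℝ≥0∞ := fun t => μ (A t) with hpdef
  have hpsum : ∑ t, p t = 1 := by
    rw [← tsum_fintype (L := .unconditional _), ← measure_iUnion hAd hAm, hAu, measure_univ]
  set Q : (Fin n → Fin N) → Set Y := fun t => ⇑θ.symm ⁻¹' (A t) with hQdef
  have hQm : ∀ t, MeasurableSet (Q t) := fun t => θ.symm.measurable (hAm t)
  have hQd : Pairwise (Disjoint on Q) := fun t t' h => (hAd h).preimage _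
  obtain ⟨C, hCm, hCd, hCu, hCν, hCerr⟩ := aux_exists_partition ν Q hQm hQd p hpsum
  -- the partitions α'
  set α' : Fin n → Fin N → Set Y := fun i j => ⋃ (t) (_ : t i = j), C t with hα'def
  have hα'm : ∀ i j, MeasurableSet (α' i j) :=
    fun i j => MeasurableSet.iUnion fun t => MeasurableSet.iUnion fun _ => hCm t
  have hα'mem : ∀ i j y, y ∈ α' i j ↔ ∃ t, t i = j ∧ y ∈ C t := by
    intro i j y
    simp only [hα'def, mem_iUnion]
    exact ⟨fun ⟨t, h1, h2⟩ => ⟨t, h1, h2⟩, fun ⟨t, h1, h2⟩ => ⟨t, h1, h2⟩⟩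
  have hCsub : ∀ (i) (t : Fin n → Fin N), C t ⊆ α' i (t i) := by
    intro i t y hy
    exact (hα'mem i (t i) y).2 ⟨t, rfl, hy⟩
  have hα'p : ∀ i, IsOrdPartition (α' i) := by
    intro i
    refine ⟨fun j => hα'm i j, fun j j' hjj' => ?_, ?_⟩
    · rw [Set.disjoint_left]
      intro y hy hy'
      obtain ⟨t, hti, hyt⟩ := (hα'mem i j y).1 hy
      obtain ⟨t', ht'i, hyt'⟩ := (hα'mem i j' y).1 hy'
      have htt' : t ≠ t' := fun h => hjj' (by rw [← hti, h, ht'i])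
      exact Set.disjoint_left.1 (hCd htt') hyt hyt'
    · apply eq_univ_of_forall
      intro y
      have hy : y ∈ ⋃ t, C t := hCu ▸ mem_univ y
      obtain ⟨t, ht⟩ := mem_iUnion.1 hy
      exact mem_iUnion.2 ⟨t i, hCsub i t ht⟩
  have hCuniq : ∀ y t t', y ∈ C t → y ∈ C t' → t = t' := by
    intro y t t' h1 h2
    by_contra hne
    exact Set.disjoint_left.1 (hCd hne) h1 h2
  have hsd : SameDist μ ν α α' := by
    intro idx
    have hiC : (⋂ i, α' i (idx i)) = C idx := by
      apply Subset.antisymm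
      · intro y hy
        have h1 : ∀ i, ∃ t, t i = idx i ∧ y ∈ C t := fun i =>
          (hα'mem i (idx i) y).1 (mem_iInter.1 hy i)
        choose tf htf1 htf2 using h1
        have i₀ : Fin n := ⟨0, hn⟩
        have hall : ∀ i, tf i = tf i₀ := fun i => hCuniq y _ _ (htf2 i) (htf2 i₀)
        have heq : tf i₀ = idx := by
          funext i
          rw [show tf i₀ = tf i from (hall i).symm]
          exact htf1 i
        exact heq ▸ htf2 i₀
      · intro y hy
        exact mem_iInter.2 fun i => hCsub i idx hy
    rw [hiC, hCν idx]
  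
  have hdmem : ((1 / (n : ℝ)) * ∑ i : Fin n, partDist ν (α' i) (β i)) ∈
      {d : ℝ | ∃ α'' : Fin n → Fin N → Set Y, (∀ i, IsOrdPartition (α'' i)) ∧
        SameDist μ ν α α'' ∧ d = (1 / (n : ℝ)) * ∑ i : Fin n, partDist ν (α'' i) (β i)} :=
    ⟨α', hα'p, hsd, rfl⟩
  refine le_trans (csInf_le hbdd hdmem) ?_
  have hn' : (0:ℝ) < n := by exact_mod_cast hn
  have hkey : ∑ i : Fin n, partDist ν (α' i) (β i) ≤ 16 * ε * n := by
    rcases le_or_gt (1/8 : ℝ) ε with hbig | hsmall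
    · -- trivial bound when ε is large
      have h2 : ∀ i, partDist ν (α' i) (β i) ≤ 2 := by
        intro i
        have hb : ∀ j, (ν (symmDiff (α' i j) (β i j))).toReal
            ≤ (ν (α' i j)).toReal + (ν (β i j)).toReal := by
          intro j
          have h1 : ν (symmDiff (α' i j) (β i j)) ≤ ν (α' i j) + ν (β i j) :=
            le_trans (measure_mono symmDiff_subset_union) (measure_union_le _ _)
          refine le_trans (ENNReal.toReal_mono ?_ h1) ?_
          · exact ENNReal.add_ne_top.2 ⟨measure_ne_top _ _, measure_ne_top _ _⟩
          · rw [ENNReal.toReal_add (measure_ne_top _ _) (measure_ne_top _ _)]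
        calc partDist ν (α' i) (β i)
            = ∑ j, (ν (symmDiff (α' i j) (β i j))).toReal := rfl
          _ ≤ ∑ j, ((ν (α' i j)).toReal + (ν (β i j)).toReal) :=
              Finset.sum_le_sum fun j _ => hb j
          _ = (∑ j, ν (α' i j)).toReal + (∑ j, ν (β i j)).toReal := by
              rw [Finset.sum_add_distrib, ENNReal.toReal_sum (fun _ _ => measure_ne_top _ _),
                ENNReal.toReal_sum (fun _ _ => measure_ne_top _ _)]
          _ = 2 := by
              rw [aux_sum_meas ν (hα'p i), aux_sum_meas ν (hβ i), measure_univ]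
              norm_num
      calc ∑ i, partDist ν (α' i) (β i) ≤ ∑ _i : Fin n, (2:ℝ) :=
            Finset.sum_le_sum fun i _ => h2 i
        _ = 2 * n := by rw [Finset.sum_const, Finset.card_univ, Fintype.card_fin]; ring
        _ ≤ 16 * ε * n := by nlinarith
    · -- main case : ε < 1/8
      -- the mismatch set W
      set W := ⋃ t, C t \ Q t with hWdef
      have hQA : ∀ t, Q t = ⇑θ '' (A t) := fun t => (θ.image_eq_preimage_symm (A t)).symm
      have hWν : ν W ≤ ENNReal.ofReal (2*ε) := by
        refine hCerr.trans ?_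
        have hper : ∀ t, p t - ν (Q t) ≤ ENNReal.ofReal ε * μ (A t \ E) + μ (A t ∩ E) := by
          intro t
          rw [tsub_le_iff_right]
          have hsplit : p t = μ (A t \ E) + μ (A t ∩ E) := (measure_diff_add_inter (A t) hEm).symm
          have hlow : ENNReal.ofReal (1-ε) * μ (A t \ E) ≤ ν (Q t) := by
            have h1 := (hEdist (A t \ E) ((hAm t).diff hEm)
              (fun x hx => hx.2)).1
            refine le_trans h1 (measure_mono ?_)
            rw [hQA t]
            exact image_mono diff_subset
          have hx : μ (A t \ E) = ENNReal.ofReal ε * μ (A t \ E)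
              + ENNReal.ofReal (1-ε) * μ (A t \ E) := by
            rw [← add_mul, ← ENNReal.ofReal_add hε.le (by linarith)]
            norm_num
          calc p t = (ENNReal.ofReal ε * μ (A t \ E) + ENNReal.ofReal (1-ε) * μ (A t \ E))
                + μ (A t ∩ E) := by rw [← hx, ← hsplit]
            _ ≤ (ENNReal.ofReal ε * μ (A t \ E) + ν (Q t)) + μ (A t ∩ E) := by
                gcongr
            _ = (ENNReal.ofReal ε * μ (A t \ E) + μ (A t ∩ E)) + ν (Q t) := by ring
        have hsum1 : ∑ t, μ (A t \ E) = μ Eᶜ := by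
          have hu : (⋃ t, A t \ E) = Eᶜ := by
            simp only [diff_eq]
            rw [← iUnion_inter, hAu, univ_inter]
          rw [← tsum_fintype (L := .unconditional _), ← measure_iUnion
            (fun t t' h => (hAd h).mono diff_subset diff_subset)
            (fun t => (hAm t).diff hEm), hu]
        have hsum2 : ∑ t, μ (A t ∩ E) = μ E := by
          have hu : (⋃ t, A t ∩ E) = E := by
            rw [← iUnion_inter, hAu, univ_inter]
          rw [← tsum_fintype (L := .unconditional _), ← measure_iUnion
            (fun t t' h => (hAd h).mono inter_subset_left inter_subset_left)
            (fun t => (hAm t).inter hEm), hu]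
        calc ∑ t, (p t - ν (Q t))
            ≤ ∑ t, (ENNReal.ofReal ε * μ (A t \ E) + μ (A t ∩ E)) :=
              Finset.sum_le_sum fun t _ => hper t
          _ = ENNReal.ofReal ε * μ Eᶜ + μ E := by
              rw [Finset.sum_add_distrib, ← Finset.mul_sum, hsum1, hsum2]
          _ ≤ ENNReal.ofReal ε * 1 + ENNReal.ofReal ε :=
              add_le_add (mul_le_mul_right prob_le_one _) hElt.le
          _ = ENNReal.ofReal (2*ε) := by
              rw [mul_one, ← ENNReal.ofReal_add hε.le hε.le]
              ring_nf
      -- the good set G and its image H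
      set G := {x : X | ((Finset.univ.filter fun i : Fin n =>
          ∀ j : Fin N, x ∈ α i j → θ x ∉ β i j).card : ℝ) ≤ ε * n} with hGdef
      have hBadm : ∀ i : Fin n, MeasurableSet {x : X | ∀ j : Fin N, x ∈ α i j → θ x ∉ β i j} := by
        intro i
        have heq : {x : X | ∀ j : Fin N, x ∈ α i j → θ x ∉ β i j}
            = ⋂ j, ((α i j)ᶜ ∪ ⇑θ ⁻¹' (β i j)ᶜ) := by
          ext x
          simp only [mem_setOf_eq, mem_iInter, mem_union, mem_compl_iff, mem_preimage]
          exact ⟨fun h j => or_iff_not_imp_left.2 fun hx => h j (not_not.1 hx),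
            fun h j hx => (h j).resolve_left (not_not.2 hx)⟩
        rw [heq]
        exact MeasurableSet.iInter fun j =>
          ((hα i).1 j).compl.union (θ.measurable ((hβ i).1 j).compl)
      have hGm : MeasurableSet G := by
        have hGeq : G = ⋃ (S : Finset (Fin n)) (_ : ((S.card : ℝ) ≤ ε * n)),
            ⋂ i, (if i ∈ S then {x : X | ∀ j : Fin N, x ∈ α i j → θ x ∉ β i j}
              else {x : X | ∀ j : Fin N, x ∈ α i j → θ x ∉ β i j}ᶜ) := by
          ext x
          simp only [hGdef, mem_setOf_eq, mem_iUnion, mem_iInter]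
          constructor
          · intro hx
            refine ⟨Finset.univ.filter fun i => ∀ j, x ∈ α i j → θ x ∉ β i j, hx, fun i => ?_⟩
            by_cases h : ∀ j, x ∈ α i j → θ x ∉ β i j
            · rw [if_pos (Finset.mem_filter.2 ⟨Finset.mem_univ i, h⟩)]
              exact h
            · rw [if_neg (fun hmem => h (Finset.mem_filter.1 hmem).2)]
              exact h
          · rintro ⟨S, hS, hx⟩
            have heq : Finset.univ.filter (fun i => ∀ j, x ∈ α i j → θ x ∉ β i j) = S := by
              ext i
              simp only [Finset.mem_filter, Finset.mem_univ, true_and]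
              constructor
              · intro h
                by_contra hiS
                have := hx i
                rw [if_neg hiS] at this
                exact this h
              · intro hiS
                have := hx i
                rw [if_pos hiS] at this
                exact this
            rw [heq]
            exact hS
        rw [hGeq]
        refine MeasurableSet.iUnion fun S => MeasurableSet.iUnion fun _ =>
          MeasurableSet.iInter fun i => ?_
        by_cases h : i ∈ S
        · rw [if_pos h]; exact hBadm i
        · rw [if_neg h]; exact (hBadm i).compl
      set H := ⇑θ.symm ⁻¹' (G ∩ Eᶜ) with hHdef
      have hHm : MeasurableSet H := θ.symm.measurable (hGm.inter hEm.compl)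
      have hHν : ENNReal.ofReal ((1-ε)*(1-2*ε)) ≤ ν H := by
        have h1 : ENNReal.ofReal (1-ε) * μ (G ∩ Eᶜ) ≤ ν H := by
          have h0 := (hEdist (G ∩ Eᶜ) (hGm.inter hEm.compl) inter_subset_right).1
          rwa [θ.image_eq_preimage_symm] at h0
        have h2 : ENNReal.ofReal (1-2*ε) ≤ μ (G ∩ Eᶜ) := by
          have h3 : μ G ≤ μ (G ∩ Eᶜ) + μ E := by
            refine (measure_mono ?_).trans (measure_union_le _ _)
            intro x hx
            by_cases hxE : x ∈ E
            · exact Or.inr hxE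
            · exact Or.inl ⟨hx, hxE⟩
          have h4 : ENNReal.ofReal (1-ε) ≤ μ (G ∩ Eᶜ) + ENNReal.ofReal ε :=
            le_trans hmatch (h3.trans (add_le_add_right hElt.le _))
          calc ENNReal.ofReal (1-2*ε) = ENNReal.ofReal ((1-ε) - ε) := by ring_nf
            _ = ENNReal.ofReal (1-ε) - ENNReal.ofReal ε := ENNReal.ofReal_sub _ hε.le
            _ ≤ μ (G ∩ Eᶜ) := tsub_le_iff_right.2 h4
        calc ENNReal.ofReal ((1-ε)*(1-2*ε))
            = ENNReal.ofReal (1-ε) * ENNReal.ofReal (1-2*ε) :=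
              ENNReal.ofReal_mul (by linarith)
          _ ≤ ENNReal.ofReal (1-ε) * μ (G ∩ Eᶜ) := by gcongr
          _ ≤ ν H := h1
      have hHc : ν Hᶜ ≤ ENNReal.ofReal (3*ε) := by
        rw [measure_compl hHm (measure_ne_top ν H), measure_univ]
        refine tsub_le_iff_right.2 ?_
        calc (1:ℝ≥0∞) = ENNReal.ofReal 1 := by simp
          _ ≤ ENNReal.ofReal (3*ε + (1-ε)*(1-2*ε)) := by
              apply ENNReal.ofReal_le_ofReal
              nlinarith [sq_nonneg ε]
          _ = ENNReal.ofReal (3*ε) + ENNReal.ofReal ((1-ε)*(1-2*ε)) :=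
              ENNReal.ofReal_add (by positivity) (by nlinarith)
          _ ≤ ENNReal.ofReal (3*ε) + ν H := add_le_add_right hHν _
      -- the per-coordinate mismatch sets U i
      set U : Fin n → Set Y := fun i => (⋃ j, (⇑θ.symm ⁻¹' (α i j) \ β i j))
        ∪ (⋃ j, (β i j \ ⇑θ.symm ⁻¹' (α i j))) with hUdef
      have hUm : ∀ i, MeasurableSet (U i) := by
        intro i
        refine MeasurableSet.union ?_ ?_
        · exact MeasurableSet.iUnion fun j => (θ.symm.measurable ((hα i).1 j)).diff ((hβ i).1 j)
        · exact MeasurableSet.iUnion fun j => ((hβ i).1 j).diff (θ.symm.measurable ((hα i).1 j))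
      -- key combinatorial bound
      have hUsum : ∑ i, ν (U i) ≤ (n : ℝ≥0∞) * ENNReal.ofReal (4*ε) := by
        set HS : Finset (Fin n) → Set Y :=
          fun Sf => H ∩ ⋂ i, (if i ∈ Sf then U i else (U i)ᶜ) with hHSdef
        have hHSm : ∀ Sf, MeasurableSet (HS Sf) := by
          intro Sf
          refine hHm.inter (MeasurableSet.iInter fun i => ?_)
          by_cases h : i ∈ Sf
          · rw [if_pos h]; exact hUm i
          · rw [if_neg h]; exact (hUm i).compl
        have hHSmem : ∀ Sf y, y ∈ HS Sf ↔ y ∈ H ∧ ∀ i, (i ∈ Sf ↔ y ∈ U i) := by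
          intro Sf y
          simp only [hHSdef, mem_inter_iff, mem_iInter]
          apply and_congr_right'
          constructor
          · intro h i
            have hh := h i
            by_cases hi : i ∈ Sf
            · rw [if_pos hi] at hh; exact ⟨fun _ => hh, fun _ => hi⟩
            · rw [if_neg hi] at hh; exact ⟨fun hmem => absurd hmem hi, fun hy => absurd hy hh⟩
          · intro h i
            by_cases hi : i ∈ Sf
            · rw [if_pos hi]; exact (h i).1 hi
            · rw [if_neg hi]; exact fun hy => hi ((h i).2 hy)
        have hHSd : Pairwise (Disjoint on HS) := by
          intro Sf Sf' hne
          rw [Function.onFun, Set.disjoint_left]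
          intro y h1 h2
          apply hne
          ext i
          rw [((hHSmem Sf y).1 h1).2 i, ((hHSmem Sf' y).1 h2).2 i]
        have hHSu : (⋃ Sf, HS Sf) = H := by
          apply Subset.antisymm
          · exact iUnion_subset fun Sf => inter_subset_left
          · intro y hy
            refine mem_iUnion.2 ⟨Finset.univ.filter (fun i => y ∈ U i),
              (hHSmem _ y).2 ⟨hy, fun i => ?_⟩⟩
            simp [Finset.mem_filter]
        have hcard : ∀ Sf : Finset (Fin n), (HS Sf).Nonempty → ((Sf.card : ℝ) ≤ ε * n) := by
          rintro Sf ⟨y, hy⟩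
          obtain ⟨hyH, hyU⟩ := (hHSmem Sf y).1 hy
          have hxG : θ.symm y ∈ G ∩ Eᶜ := hyH
          have hsub : Sf ⊆ Finset.univ.filter
              (fun i => ∀ j, θ.symm y ∈ α i j → θ (θ.symm y) ∉ β i j) := by
            intro i hi
            refine Finset.mem_filter.2 ⟨Finset.mem_univ i, ?_⟩
            have hyUi : y ∈ U i := (hyU i).1 hi
            rw [hUdef] at hyUi
            intro j' hj'
            rcases hyUi with h1 | h1
            · obtain ⟨j, hj⟩ := mem_iUnion.1 h1
              have hjj : j' = j := by
                by_contra hne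
                exact Set.disjoint_left.1 ((hα i).2.1 j' j hne) hj' hj.1
              rw [θ.apply_symm_apply, hjj]
              exact hj.2
            · obtain ⟨j, hj⟩ := mem_iUnion.1 h1
              have hjj : j' ≠ j := fun h => hj.2 (h ▸ hj')
              rw [θ.apply_symm_apply]
              intro hyb
              exact Set.disjoint_left.1 ((hβ i).2.1 j' j hjj) hyb hj.1
          have h1 : Sf.card ≤ (Finset.univ.filter
              (fun i => ∀ j, θ.symm y ∈ α i j → θ (θ.symm y) ∉ β i j)).card :=
            Finset.card_le_card hsub
          have h2 := hxG.1
          rw [hGdef, mem_setOf_eq] at h2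
          calc (Sf.card : ℝ) ≤ _ := Nat.cast_le.2 h1
            _ ≤ ε * n := h2
        have hUiH : ∀ i, ν (U i ∩ H) = ∑ Sf : Finset (Fin n), ν (U i ∩ HS Sf) := by
          intro i
          have hU2 : U i ∩ H = ⋃ Sf, (U i ∩ HS Sf) := by rw [← inter_iUnion, hHSu]
          rw [hU2, measure_iUnion
            (fun Sf Sf' h => (hHSd h).mono inter_subset_right inter_subset_right)
            (fun Sf => (hUm i).inter (hHSm Sf)), tsum_fintype]
        have hUHS : ∀ (i) (Sf : Finset (Fin n)),
            U i ∩ HS Sf = if i ∈ Sf then HS Sf else ∅ := by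
          intro i Sf
          by_cases h : i ∈ Sf
          · rw [if_pos h]
            exact Subset.antisymm inter_subset_right
              (fun y hy => ⟨(((hHSmem Sf y).1 hy).2 i).1 h, hy⟩)
          · rw [if_neg h]
            exact eq_empty_of_forall_notMem fun y hy =>
              h ((((hHSmem Sf y).1 hy.2).2 i).2 hy.1)
        have hswap : ∑ i, ν (U i ∩ H) = ∑ Sf : Finset (Fin n), (Sf.card : ℝ≥0∞) * ν (HS Sf) := by
          rw [Finset.sum_congr rfl (fun i _ => hUiH i), Finset.sum_comm]
          refine Finset.sum_congr rfl fun Sf _ => ?_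
          have hterm : ∀ i : Fin n, ν (U i ∩ HS Sf) = if i ∈ Sf then ν (HS Sf) else 0 := by
            intro i
            rw [hUHS i Sf]
            by_cases h : i ∈ Sf
            · rw [if_pos h, if_pos h]
            · rw [if_neg h, if_neg h, measure_empty]
          rw [Finset.sum_congr rfl fun i _ => hterm i, Finset.sum_ite_mem, Finset.univ_inter,
            Finset.sum_const, nsmul_eq_mul]
        have hUiHbound : ∑ i, ν (U i ∩ H) ≤ ENNReal.ofReal (ε * n) := by
          rw [hswap]
          have hb : ∀ Sf : Finset (Fin n),
              (Sf.card : ℝ≥0∞) * ν (HS Sf) ≤ ENNReal.ofReal (ε*n) * ν (HS Sf) := by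
            intro Sf
            rcases eq_empty_or_nonempty (HS Sf) with he | hne
            · simp [he]
            · refine mul_le_mul_left ?_ _
              calc (Sf.card : ℝ≥0∞) = ENNReal.ofReal (Sf.card : ℝ) := by
                    rw [ENNReal.ofReal_natCast]
                _ ≤ ENNReal.ofReal (ε * n) := ENNReal.ofReal_le_ofReal (hcard Sf hne)
          calc ∑ Sf : Finset (Fin n), (Sf.card : ℝ≥0∞) * ν (HS Sf)
              ≤ ∑ Sf : Finset (Fin n), ENNReal.ofReal (ε*n) * ν (HS Sf) :=
                Finset.sum_le_sum fun Sf _ => hb Sf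
            _ = ENNReal.ofReal (ε*n) * ν H := by
                rw [← Finset.mul_sum, ← tsum_fintype (L := .unconditional _), ← measure_iUnion hHSd hHSm, hHSu]
            _ ≤ ENNReal.ofReal (ε*n) * 1 := mul_le_mul_right prob_le_one _
            _ = ENNReal.ofReal (ε*n) := mul_one _
        have hUb : ∀ i, ν (U i) ≤ ν (U i ∩ H) + ν Hᶜ := by
          intro i
          refine (measure_mono ?_).trans (measure_union_le _ _)
          intro y hy
          by_cases h : y ∈ H
          · exact Or.inl ⟨hy, h⟩
          · exact Or.inr h
        calc ∑ i, ν (U i) ≤ ∑ i, (ν (U i ∩ H) + ν Hᶜ) := Finset.sum_le_sum fun i _ => hUb i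
          _ = (∑ i, ν (U i ∩ H)) + (n : ℝ≥0∞) * ν Hᶜ := by
              rw [Finset.sum_add_distrib, Finset.sum_const, Finset.card_univ, Fintype.card_fin,
                nsmul_eq_mul]
          _ ≤ ENNReal.ofReal (ε * n) + (n:ℝ≥0∞) * ENNReal.ofReal (3*ε) :=
              add_le_add hUiHbound (mul_le_mul_right hHc _)
          _ = (n:ℝ≥0∞) * ENNReal.ofReal ε + (n:ℝ≥0∞) * ENNReal.ofReal (3*ε) := by
              rw [ENNReal.ofReal_mul hε.le, ENNReal.ofReal_natCast, mul_comm]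
          _ = (n:ℝ≥0∞) * ENNReal.ofReal (4*ε) := by
              rw [← mul_add, ← ENNReal.ofReal_add hε.le (by positivity)]
              ring_nf
      have hWm : MeasurableSet W := MeasurableSet.iUnion fun t => (hCm t).diff (hQm t)
      have hper_i : ∀ i, ∑ j, ν (symmDiff (α' i j) (β i j)) ≤ 2 * ν W + 2 * ν (U i) := by
        intro i
        have hsd_eq : ∀ j, ν (symmDiff (α' i j) (β i j))
            = ν (α' i j \ β i j) + ν (β i j \ α' i j) := by
          intro j
          rw [Set.symmDiff_def]
          exact measure_union disjoint_sdiff_sdiff (((hβ i).1 j).diff (hα'm i j))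
        have h1 : ∑ j, ν (α' i j \ β i j) = ν (⋃ j, (α' i j \ β i j)) := by
          rw [measure_iUnion (fun j j' h => ((hα'p i).2.1 j j' h).mono diff_subset diff_subset)
            (fun j => (hα'm i j).diff ((hβ i).1 j)), tsum_fintype]
        have h2 : ∑ j, ν (β i j \ α' i j) = ν (⋃ j, (β i j \ α' i j)) := by
          rw [measure_iUnion (fun j j' h => ((hβ i).2.1 j j' h).mono diff_subset diff_subset)
            (fun j => ((hβ i).1 j).diff (hα'm i j)), tsum_fintype]
        have hsub1 : (⋃ j, (α' i j \ β i j)) ⊆ W ∪ U i := by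
          intro y hy
          obtain ⟨j, hyj⟩ := mem_iUnion.1 hy
          obtain ⟨t, hti, hyt⟩ := (hα'mem i j y).1 hyj.1
          by_cases hyQ : y ∈ Q t
          · right
            rw [hUdef]
            left
            simp only [hQdef, mem_preimage, hAdef, mem_iInter] at hyQ
            refine mem_iUnion.2 ⟨j, ?_, hyj.2⟩
            have h3 : θ.symm y ∈ α i (t i) := hyQ i
            rw [hti] at h3
            exact h3
          · left
            exact mem_iUnion.2 ⟨t, hyt, hyQ⟩
        have hsub2 : (⋃ j, (β i j \ α' i j)) ⊆ W ∪ U i := by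
          intro y hy
          obtain ⟨j, hyj⟩ := mem_iUnion.1 hy
          have hyC : y ∈ ⋃ t, C t := hCu ▸ mem_univ y
          obtain ⟨t, hyt⟩ := mem_iUnion.1 hyC
          have hti : t i ≠ j := fun h => hyj.2 (h ▸ hCsub i t hyt)
          by_cases hyQ : y ∈ Q t
          · right
            rw [hUdef]
            right
            simp only [hQdef, mem_preimage, hAdef, mem_iInter] at hyQ
            refine mem_iUnion.2 ⟨j, hyj.1, fun hmem => ?_⟩
            exact Set.disjoint_left.1 ((hα i).2.1 (t i) j hti) (hyQ i) hmem
          · left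
            exact mem_iUnion.2 ⟨t, hyt, hyQ⟩
        calc ∑ j, ν (symmDiff (α' i j) (β i j))
            = ν (⋃ j, (α' i j \ β i j)) + ν (⋃ j, (β i j \ α' i j)) := by
              rw [Finset.sum_congr rfl fun j _ => hsd_eq j, Finset.sum_add_distrib, h1, h2]
          _ ≤ (ν W + ν (U i)) + (ν W + ν (U i)) :=
              add_le_add ((measure_mono hsub1).trans (measure_union_le _ _))
                ((measure_mono hsub2).trans (measure_union_le _ _))
          _ = 2 * ν W + 2 * ν (U i) := by ring
      have hmain : ∑ i : Fin n, ∑ j, ν (symmDiff (α' i j) (β i j))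
          ≤ (n:ℝ≥0∞) * ENNReal.ofReal (16*ε) := by
        have e1 : (2:ℝ≥0∞) * ENNReal.ofReal (2*ε) = ENNReal.ofReal (4*ε) := by
          rw [show (2:ℝ≥0∞) = ENNReal.ofReal 2 by simp, ← ENNReal.ofReal_mul (by norm_num)]
          ring_nf
        have e2 : (2:ℝ≥0∞) * ENNReal.ofReal (4*ε) = ENNReal.ofReal (8*ε) := by
          rw [show (2:ℝ≥0∞) = ENNReal.ofReal 2 by simp, ← ENNReal.ofReal_mul (by norm_num)]
          ring_nf
        calc ∑ i : Fin n, ∑ j, ν (symmDiff (α' i j) (β i j))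
            ≤ ∑ i : Fin n, (2 * ν W + 2 * ν (U i)) := Finset.sum_le_sum fun i _ => hper_i i
          _ = (n:ℝ≥0∞) * (2 * ν W) + 2 * ∑ i, ν (U i) := by
              rw [Finset.sum_add_distrib, Finset.sum_const, Finset.card_univ, Fintype.card_fin,
                nsmul_eq_mul, ← Finset.mul_sum]
          _ ≤ (n:ℝ≥0∞) * (2 * ENNReal.ofReal (2*ε)) + 2 * ((n:ℝ≥0∞) * ENNReal.ofReal (4*ε)) :=
              add_le_add (mul_le_mul_right (mul_le_mul_right hWν _) _) (mul_le_mul_right hUsum _)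
          _ = (n:ℝ≥0∞) * ((2 * ENNReal.ofReal (2*ε)) + (2 * ENNReal.ofReal (4*ε))) := by ring
          _ = (n:ℝ≥0∞) * (ENNReal.ofReal (4*ε) + ENNReal.ofReal (8*ε)) := by rw [e1, e2]
          _ ≤ (n:ℝ≥0∞) * ENNReal.ofReal (16*ε) := by
              refine mul_le_mul_right ?_ _
              rw [← ENNReal.ofReal_add (by positivity) (by positivity)]
              exact ENNReal.ofReal_le_ofReal (by linarith)
      have hconv : ∑ i : Fin n, partDist ν (α' i) (β i)
          = (∑ i : Fin n, ∑ j, ν (symmDiff (α' i j) (β i j))).toReal := by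
        have hinner : ∀ i : Fin n, partDist ν (α' i) (β i)
            = (∑ j, ν (symmDiff (α' i j) (β i j))).toReal := by
          intro i
          rw [ENNReal.toReal_sum (fun j _ => measure_ne_top _ _)]
          rfl
        rw [Finset.sum_congr rfl fun i _ => hinner i,
          ENNReal.toReal_sum (fun i _ =>
            (ENNReal.sum_lt_top.2 fun j _ => measure_lt_top _ _).ne)]
      rw [hconv]
      have hfin2 : (n:ℝ≥0∞) * ENNReal.ofReal (16*ε) ≠ ⊤ :=
        ENNReal.mul_ne_top (by simp) ENNReal.ofReal_ne_top
      have hfinal := ENNReal.toReal_mono hfin2 hmain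
      rw [ENNReal.toReal_mul, ENNReal.toReal_ofReal (by positivity)] at hfinal
      have hncast : ((n:ℝ≥0∞)).toReal = (n:ℝ) := by simp
      rw [hncast] at hfinal
      linarith
  calc (1 / (n:ℝ)) * ∑ i, partDist ν (α' i) (β i) ≤ (1/(n:ℝ)) * (16*ε*n) := by
        apply mul_le_mul_of_nonneg_left hkey (by positivity)
    _ = 16 * ε := by field_simp
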